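/- arXiv:1811.03117 — 3 statements merged into one kernel-verified Lean document; each statement's English description precedes it below -/
import Mathlib

section
/- Let m be an integer and n a positive integer, and let G = BS(m,n). In the complex group algebra ℂ[G] (the monoid algebra of G over ℂ), the element x = Σ_{k=0}^{n-1} δ_{a^k t a t^{-1} a^{-k}} (the sum of the basis elements indexed by the group elements a^k t a t^{-1} a^{-k} for 0 ≤ k ≤ n−1) commutes with the basis element δ_a; consequently x commutes with every element of the subalgebra generated by δ_a and δ_{a^{-1}}. -/
/-- The defining relator set of the Baumslag–Solitar group `BS(m, n)`:
`a` is indexed by `false`, `t` by `true`. -/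
def bsRels (m n : ℤ) : Set (FreeGroup Bool) :=
  {FreeGroup.of true * FreeGroup.of false ^ m * (FreeGroup.of true)⁻¹ * (FreeGroup.of false ^ n)⁻¹}

/-- The Baumslag–Solitar group `BS(m, n) = ⟨a, t ∣ t a^m t⁻¹ = a^n⟩`. -/
abbrev BS (m n : ℤ) := PresentedGroup (bsRels m n)

/-- The generator `a` of `BS(m, n)`. -/
def BS.a (m n : ℤ) : BS m n := PresentedGroup.of false

/-- The generator `t` of `BS(m, n)`. -/
def BS.t (m n : ℤ) : BS m n := PresentedGroup.of true

lemma bs_rel (m : ℤ) (n : ℤ) :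
    BS.t m n * BS.a m n ^ m * (BS.t m n)⁻¹ = BS.a m n ^ n := by
  have h1 : ((QuotientGroup.mk (FreeGroup.of true * FreeGroup.of false ^ m *
      (FreeGroup.of true)⁻¹ * (FreeGroup.of false ^ n)⁻¹)) : BS m n) = 1 := by
    apply (QuotientGroup.eq_one_iff _).mpr
    exact Subgroup.subset_normalClosure (by simp [bsRels])
  have h2 : BS.t m n * BS.a m n ^ m * (BS.t m n)⁻¹ * (BS.a m n ^ n)⁻¹ = 1 := by
    have h3 := PresentedGroup.one_of_mem (rels := bsRels m n) (Set.mem_singleton _)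
    simpa [BS.a, BS.t, PresentedGroup.of] using h3
  have := mul_eq_one_iff_eq_inv.mp h2
  simpa using this

theorem group_algebra_element_commutes (m : ℤ) (n : ℕ) (hn : 0 < n) :
    Commute
      (∑ k ∈ Finset.range n,
        MonoidAlgebra.of ℂ (BS m n)
          (BS.a m n ^ k * BS.t m n * BS.a m n * (BS.t m n)⁻¹ * (BS.a m n ^ k)⁻¹))
      (MonoidAlgebra.of ℂ (BS m n) (BS.a m n)) ∧
    ∀ y ∈ Algebra.adjoin ℂ
        ({MonoidAlgebra.of ℂ (BS m n) (BS.a m n),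
          MonoidAlgebra.of ℂ (BS m n) (BS.a m n)⁻¹} : Set (MonoidAlgebra ℂ (BS m n))),
      Commute
        (∑ k ∈ Finset.range n,
          MonoidAlgebra.of ℂ (BS m n)
            (BS.a m n ^ k * BS.t m n * BS.a m n * (BS.t m n)⁻¹ * (BS.a m n ^ k)⁻¹))
        y := by
  set a := BS.a m n with ha
  set t := BS.t m n with ht
  set of := MonoidAlgebra.of ℂ (BS m n) with hof
  set g : ℕ → BS m n := fun k => a ^ k * t * a * t⁻¹ * (a ^ k)⁻¹ with hg
  -- a^n commutes with t a t⁻¹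
  have hrel : t * a ^ m * t⁻¹ = a ^ (n : ℤ) := bs_rel m n
  have hcomm : Commute (a ^ n) (t * a * t⁻¹) := by
    have : a ^ n = t * a ^ m * t⁻¹ := by rw [hrel, zpow_natCast]
    rw [this]
    show _ = _
    group
  -- the key cyclic shift: a * g k = g (k+1) * a, and g n = g 0
  have hshift : ∀ k, a * g k = g (k + 1) * a := by
    intro k
    simp only [hg]
    group
  have hgn : g n = g 0 := by
    simp only [hg, pow_zero, inv_one, one_mul, mul_one]
    have h := hcomm.eq
    calc a ^ n * t * a * t⁻¹ * (a ^ n)⁻¹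
        = a ^ n * (t * a * t⁻¹) * (a ^ n)⁻¹ := by group
      _ = (t * a * t⁻¹) * a ^ n * (a ^ n)⁻¹ := by rw [h]
      _ = t * a * t⁻¹ := by group
  -- first part
  have hX : Commute (∑ k ∈ Finset.range n, of (g k)) (of a) := by
    show (∑ k ∈ Finset.range n, of (g k)) * of a = of a * ∑ k ∈ Finset.range n, of (g k)
    rw [Finset.sum_mul, Finset.mul_sum]
    simp only [← map_mul]
    have hL : ∀ k, of (a * g k) = of (g (k + 1) * a) := fun k => by rw [hshift]
    simp only [hL]
    have h1 : ∑ k ∈ Finset.range (n + 1), of (g k * a)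
        = ∑ k ∈ Finset.range n, of (g (k + 1) * a) + of (g 0 * a) :=
      Finset.sum_range_succ' _ n
    have h2 : ∑ k ∈ Finset.range (n + 1), of (g k * a)
        = ∑ k ∈ Finset.range n, of (g k * a) + of (g n * a) :=
      Finset.sum_range_succ _ n
    rw [hgn] at h2
    exact (add_right_cancel (h1.symm.trans h2)).symm
  constructor
  · exact hX
  · -- second part
    intro y hy
    set X := ∑ k ∈ Finset.range n, of (g k) with hXdef
    have hunit : of a * of a⁻¹ = 1 := by rw [← map_mul, mul_inv_cancel, map_one]
    have hunit' : of a⁻¹ * of a = 1 := by rw [← map_mul, inv_mul_cancel, map_one]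
    let u : (MonoidAlgebra ℂ (BS m n))ˣ := ⟨of a, of a⁻¹, hunit, hunit'⟩
    have hX2 : Commute X (of a⁻¹) := by
      have : Commute X (u : MonoidAlgebra ℂ (BS m n)) := hX
      exact this.units_inv_right
    have hsub : Algebra.adjoin ℂ ({of a, of a⁻¹} : Set (MonoidAlgebra ℂ (BS m n)))
        ≤ Subalgebra.centralizer ℂ {X} := by
      apply Algebra.adjoin_le
      intro z hz
      rw [SetLike.mem_coe, Subalgebra.mem_centralizer_iff]
      rintro w hw
      rw [Set.mem_singleton_iff] at hw
      subst hw
      rcases hz with hz | hz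
      · rw [hz]; exact hX.eq
      · rw [Set.mem_singleton_iff] at hz; rw [hz]; exact hX2.eq
    exact (Subalgebra.mem_centralizer_iff ℂ).mp (hsub hy) X rfl
end

section
/- Let m and n be nonzero integers with |m| ≥ 2, and let G = BS(m,n). Then the element t a t^{-1} does not belong to the cyclic subgroup ⟨a⟩ generated by a. -/
open SemidirectProduct Multiplicative

/-- Multiplication by a unit, as a hom from units to automorphisms of `Multiplicative R`. -/
def unitsToMulAut (R : Type*) [CommRing R] : Rˣ →* MulAut (Multiplicative R) where
  toFun u :=
    { toFun := fun x => ofAdd ((u : R) * x.toAdd)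
      invFun := fun x => ofAdd (((u⁻¹ : Rˣ) : R) * x.toAdd)
      left_inv := fun x => by simp [← mul_assoc]
      right_inv := fun x => by simp [← mul_assoc]
      map_mul' := fun x y => by simp [mul_add] }
  map_one' := by ext x; simp
  map_mul' u v := by ext x; simp [mul_assoc]

@[simp] lemma unitsToMulAut_apply (R : Type*) [CommRing R] (u : Rˣ) (x : R) :
    unitsToMulAut R u (ofAdd x) = ofAdd ((u : R) * x) := rfl

lemma ofAdd_one_zpow (R : Type*) [CommRing R] (j : ℤ) :
    (ofAdd (1 : R)) ^ j = ofAdd (j : R) := by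
  rw [← ofAdd_zsmul]; norm_num

/-- The representation of `BS(m,n)` in `Multiplicative R ⋊ Rˣ` for a unit `u` with
`u * m = n`, sending `a` to `(1, 1)` and `t` to `(0, u)`. If `a ^ k = t a t⁻¹` then
`k = u` in `R`. -/
lemma rep_eq {R : Type*} [CommRing R] {m n : ℤ} (u : Rˣ) (hu : (u : R) * (m : R) = (n : R))
    {k : ℤ} (hk : (BS.a m n) ^ k = BS.t m n * BS.a m n * (BS.t m n)⁻¹) :
    (k : R) = (u : R) := by
  set M := SemidirectProduct (Multiplicative R) Rˣ (unitsToMulAut R) with hM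
  set f : Bool → M := fun b => if b then inr u else inl (ofAdd 1) with hf
  have hrel : ∀ r ∈ bsRels m n, FreeGroup.lift f r = 1 := by
    intro r hr
    rcases hr with rfl
    simp only [map_mul, map_inv, map_zpow, FreeGroup.lift_apply_of]
    show inr u * (inl (ofAdd (1:R)) : M) ^ m * (inr u)⁻¹ * ((inl (ofAdd (1:R)) : M) ^ n)⁻¹ = 1
    rw [← map_zpow inl, ← map_zpow inl, ofAdd_one_zpow, ofAdd_one_zpow,
      ← map_inv inr, ← inl_aut, unitsToMulAut_apply, hu]
    exact mul_inv_cancel _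
  set ψ := PresentedGroup.toGroup hrel with hψ
  have ha : ψ (BS.a m n) = inl (ofAdd (1 : R)) := PresentedGroup.toGroup.of hrel
  have ht : ψ (BS.t m n) = inr u := PresentedGroup.toGroup.of hrel
  have := congrArg ψ hk
  rw [map_zpow, map_mul, map_mul, map_inv, ha, ht, ← map_zpow inl, ofAdd_one_zpow,
    ← map_inv inr, ← inl_aut, unitsToMulAut_apply, mul_one] at this
  have := inl_injective this
  exact ofAdd.injective this

theorem tat_inv_not_in_cyclic (m n : ℤ) (hm0 : m ≠ 0) (hn0 : n ≠ 0) (hm : 2 ≤ |m|) :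
    BS.t m n * BS.a m n * (BS.t m n)⁻¹ ∉ Subgroup.zpowers (BS.a m n) := by
  intro h
  obtain ⟨k, hk⟩ := Subgroup.mem_zpowers_iff.mp h
  -- Step 1: over ℚ, deduce k * m = n
  have hmQ : (m : ℚ) ≠ 0 := Int.cast_ne_zero.mpr hm0
  have hq : ((n : ℚ) / m) ≠ 0 := div_ne_zero (Int.cast_ne_zero.mpr hn0) hmQ
  have h1 : (k : ℚ) = ((n : ℚ) / m) := by
    have := rep_eq (Units.mk0 _ hq) (by
      simp only [Units.val_mk0]
      field_simp) hk
    simpa using this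
  have hkm : k * m = n := by
    have : (k : ℚ) * m = n := by rw [h1]; field_simp
    exact_mod_cast this
  have hk0 : k ≠ 0 := fun h0 => hn0 (by rw [h0, zero_mul] at hkm; exact hkm.symm)
  -- Step 2: pick a prime p dividing m
  set p := m.natAbs.minFac with hpdef
  have hm2 : 2 ≤ m.natAbs := by rw [Int.abs_eq_natAbs] at hm; exact_mod_cast hm
  have hp : p.Prime := Nat.minFac_prime (by omega)
  haveI := Fact.mk hp
  have hpm : (p : ℤ) ∣ m := by
    have h1 : (p : ℤ) ∣ (m.natAbs : ℤ) := Int.natCast_dvd_natCast.mpr (Nat.minFac_dvd _)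
    exact h1.trans (Int.natAbs_dvd.mpr dvd_rfl)
  by_cases hpk : (p : ℤ) ∣ k
  · -- quotient modulo p, with t acting as multiplication by k + 1
    have hnz : ((k + 1 : ℤ) : ZMod p) ≠ 0 := by
      rw [Ne, ZMod.intCast_zmod_eq_zero_iff_dvd]
      intro hdvd
      have : (p : ℤ) ∣ 1 := by simpa using dvd_sub hdvd hpk
      have := Int.le_of_dvd one_pos this
      have := hp.two_le
      omega
    have hU : IsUnit ((k + 1 : ℤ) : ZMod p) := isUnit_iff_ne_zero.mpr hnz
    have hu : (hU.unit : ZMod p) * (m : ZMod p) = (n : ZMod p) := by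
      rw [hU.unit_spec]
      have : ((p : ℤ) : ℤ) ∣ ((k + 1) * m - n) := by
        rw [← hkm]; ring_nf; simpa using hpm
      have h0 : (((k + 1) * m - n : ℤ) : ZMod p) = 0 :=
        (ZMod.intCast_zmod_eq_zero_iff_dvd _ _).mpr this
      push_cast at h0 ⊢
      linear_combination h0
    have := rep_eq hU.unit hu hk
    rw [hU.unit_spec] at this
    have h0 : ((1 : ℤ) : ZMod p) = 0 := by push_cast at this ⊢; linear_combination -this
    rw [ZMod.intCast_zmod_eq_zero_iff_dvd] at h0
    have := Int.le_of_dvd one_pos h0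
    have := hp.two_le
    omega
  · -- quotient modulo p², with t acting as multiplication by k + p
    haveI : NeZero (p ^ 2) := ⟨pow_ne_zero 2 hp.pos.ne'⟩
    have hnd : ¬ (p : ℤ) ∣ (k + p) := fun hdvd =>
      hpk (by simpa using dvd_sub hdvd (dvd_refl (p : ℤ)))
    have hU : IsUnit (((k + (p : ℤ)) : ℤ) : ZMod (p ^ 2)) := by
      have hcop : Nat.Coprime (k + (p : ℤ)).natAbs (p ^ 2) := by
        apply Nat.Coprime.pow_right
        rw [Nat.coprime_comm, hp.coprime_iff_not_dvd]
        intro hd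
        exact hnd ((Int.natCast_dvd_natCast.mpr hd).trans (Int.natAbs_dvd.mpr dvd_rfl))
      have hun := (ZMod.isUnit_iff_coprime (k + (p : ℤ)).natAbs (p ^ 2)).mpr hcop
      have hun' : IsUnit ((((k + (p : ℤ)).natAbs : ℤ)) : ZMod (p ^ 2)) := by
        rwa [Int.cast_natCast]
      rcases Int.natAbs_eq (k + (p : ℤ)) with he | he
      · rw [he]; exact hun'
      · rw [he, Int.cast_neg]; exact hun'.neg
    have hdv : ((p ^ 2 : ℕ) : ℤ) ∣ ((k + p) * m - n) := by
      push_cast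
      have he : (k + p) * m - n = p * m := by rw [← hkm]; ring
      rw [he, sq]
      exact mul_dvd_mul_left _ hpm
    have hu : (hU.unit : ZMod (p ^ 2)) * (m : ZMod (p ^ 2)) = (n : ZMod (p ^ 2)) := by
      rw [hU.unit_spec]
      have h0 : (((k + p) * m - n : ℤ) : ZMod (p ^ 2)) = 0 :=
        (ZMod.intCast_zmod_eq_zero_iff_dvd _ _).mpr hdv
      push_cast at h0 ⊢
      linear_combination h0
    have hfin := rep_eq hU.unit hu hk
    rw [hU.unit_spec] at hfin
    have h0 : (((p : ℤ)) : ZMod (p ^ 2)) = 0 := by push_cast at hfin ⊢; linear_combination -hfin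
    rw [ZMod.intCast_zmod_eq_zero_iff_dvd] at h0
    have hdd : p ^ 2 ∣ p := by exact_mod_cast h0
    have := Nat.le_of_dvd hp.pos hdd
    nlinarith [hp.two_le]
end

section
/- Let m and n be nonzero integers, let G = BS(m,n), let π be a mixing unitary representation of G on a complex Hilbert space 𝓗, and let c : G → 𝓗 be a 1-cocycle for π. If c(a) = 0, then c(t) = 0. -/
/-- A unitary representation `π` of `G` on a complex Hilbert space is mixing if all of its
matrix coefficients tend to `0` along the cofinite filter on `G`. -/
def IsMixingRep {G : Type*} [Group G] {𝓗 : Type*} [NormedAddCommGroup 𝓗]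
    [InnerProductSpace ℂ 𝓗] (π : G →* (𝓗 ≃ₗᵢ[ℂ] 𝓗)) : Prop :=
  ∀ ξ η : 𝓗, Filter.Tendsto (fun g : G => (inner ℂ (π g ξ) η : ℂ)) Filter.cofinite (nhds 0)

/-- `c : G → 𝓗` is a 1-cocycle for the representation `π`. -/
def IsCocycle {G : Type*} [Group G] {𝓗 : Type*} [NormedAddCommGroup 𝓗]
    [InnerProductSpace ℂ 𝓗] (π : G →* (𝓗 ≃ₗᵢ[ℂ] 𝓗)) (c : G → 𝓗) : Prop :=
  ∀ g h : G, c (g * h) = c g + π g (c h)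

lemma addRight_one_zpow (k : ℤ) :
    (Equiv.addRight (1 : ℚ)) ^ k = Equiv.addRight (k : ℚ) := by
  induction k using Int.induction_on with
  | zero => ext x; simp
  | succ i ih => rw [zpow_add, ih]; ext x; push_cast; simp; ring
  | pred i ih => rw [sub_eq_add_neg, zpow_add, ih]; ext x; push_cast; simp; ring

theorem cocycle_vanishes_on_t (m n : ℤ) (hm : m ≠ 0) (hn : n ≠ 0)
    (𝓗 : Type*) [NormedAddCommGroup 𝓗] [InnerProductSpace ℂ 𝓗] [CompleteSpace 𝓗]
    (π : BS m n →* (𝓗 ≃ₗᵢ[ℂ] 𝓗)) (hπ : IsMixingRep π)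
    (c : BS m n → 𝓗) (hc : IsCocycle π c) (ha : c (BS.a m n) = 0) :
    c (BS.t m n) = 0 := by
  -- The affine representation of BS(m,n) on ℚ
  have hq : ((n : ℚ) / m) ≠ 0 := div_ne_zero (Int.cast_ne_zero.2 hn) (Int.cast_ne_zero.2 hm)
  set f : Bool → Equiv.Perm ℚ :=
    fun b => if b then Equiv.mulLeft₀ ((n:ℚ)/m) hq else Equiv.addRight 1 with hf
  have hrel : ∀ r ∈ bsRels m n, FreeGroup.lift f r = 1 := by
    intro r hr
    rw [bsRels, Set.mem_singleton_iff] at hr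
    subst hr
    simp only [map_mul, map_inv, map_zpow, FreeGroup.lift_apply_of, hf, if_true, if_false, Bool.false_eq_true, ↓reduceIte,
      addRight_one_zpow]
    ext x
    simp only [Equiv.Perm.mul_apply, Equiv.Perm.inv_def, Equiv.mulLeft₀_symm_apply,
      Equiv.mulLeft₀_apply, Equiv.symm_symm, Equiv.addRight_symm, Equiv.coe_addRight,
      Equiv.Perm.one_apply]
    field_simp
    ring
  set φ : BS m n →* Equiv.Perm ℚ := PresentedGroup.toGroup hrel with hφ
  have hφa : φ (BS.a m n) = Equiv.addRight (1 : ℚ) := by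
    rw [hφ, BS.a, PresentedGroup.toGroup.of]; simp [hf]
  -- injectivity of k ↦ a^(n k)
  have hψ : Function.Injective (fun k : ℤ => BS.a m n ^ (n * k)) := by
    intro k₁ k₂ h
    have h2 : φ (BS.a m n ^ (n * k₁)) = φ (BS.a m n ^ (n * k₂)) := by simp only at h; rw [h]
    rw [map_zpow, map_zpow, hφa, addRight_one_zpow, addRight_one_zpow] at h2
    have h3 : Equiv.addRight ((n*k₁ : ℤ) : ℚ) 0 = Equiv.addRight ((n*k₂ : ℤ) : ℚ) 0 := by
      rw [h2]
    simp only [Equiv.coe_addRight, zero_add] at h3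
    have : ((n*k₁ : ℤ) : ℚ) = ((n*k₂ : ℤ) : ℚ) := h3
    exact mul_left_cancel₀ hn (Int.cast_injective this)
  -- the relation t a^m = a^n t in BS(m,n)
  have hrelBS : BS.t m n * BS.a m n ^ m = BS.a m n ^ n * BS.t m n := by
    have h1 : ((QuotientGroup.mk (FreeGroup.of true * FreeGroup.of false ^ m *
        (FreeGroup.of true)⁻¹ * (FreeGroup.of false ^ n)⁻¹) : BS m n)) = 1 := by
      rw [QuotientGroup.eq_one_iff]
      exact Subgroup.subset_normalClosure rfl
    have h2 : BS.t m n * BS.a m n ^ m * (BS.t m n)⁻¹ * (BS.a m n ^ n)⁻¹ = 1 := by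
      have h1' : PresentedGroup.mk (bsRels m n)
        (FreeGroup.of true * FreeGroup.of false ^ m * (FreeGroup.of true)⁻¹ * (FreeGroup.of false ^ n)⁻¹) = 1 := h1
      rw [map_mul, map_mul, map_mul, map_inv, map_inv, map_zpow, map_zpow] at h1'
      exact h1'
    rw [mul_inv_eq_one] at h2
    exact mul_inv_eq_iff_eq_mul.mp h2
  -- the cocycle vanishes on powers of a
  have hc1 : c 1 = 0 := by
    have := hc 1 1
    simp only [mul_one, map_one, LinearIsometryEquiv.coe_one, id_eq] at this
    exact (left_eq_add.mp this)
  let S : Subgroup (BS m n) :=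
    { carrier := {g | c g = 0}
      one_mem' := hc1
      mul_mem' := by
        intro g h hg hh
        simp only [Set.mem_setOf_eq] at *
        rw [hc g h, hg, hh, map_zero, add_zero]
      inv_mem' := by
        intro g hg
        simp only [Set.mem_setOf_eq] at *
        have := hc g⁻¹ g
        rw [inv_mul_cancel, hc1, hg, map_zero, add_zero] at this
        exact this.symm }
  have hprop : ∀ k : ℤ, c (BS.a m n ^ k) = 0 := fun k => S.zpow_mem ha k
  set ξ := c (BS.t m n) with hξ
  -- ξ is fixed by π (a^n)
  have hfix : π (BS.a m n ^ n) ξ = ξ := by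
    have h1 := hc (BS.t m n) (BS.a m n ^ m)
    have h2 := hc (BS.a m n ^ n) (BS.t m n)
    rw [hrelBS, hprop m, map_zero, add_zero] at h1
    rw [h1, hprop n, zero_add] at h2
    exact h2.symm
  have hfixk : ∀ k : ℤ, ((π (BS.a m n ^ n)) ^ k) ξ = ξ := by
    intro k
    induction k using Int.induction_on with
    | zero => simp
    | succ i ih =>
      rw [zpow_add, zpow_one, LinearIsometryEquiv.coe_mul, Function.comp_apply, hfix, ih]
    | pred i ih =>
      rw [sub_eq_add_neg, zpow_add, zpow_neg_one, LinearIsometryEquiv.coe_mul,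
        Function.comp_apply, LinearIsometryEquiv.coe_inv]
      rw [show (π (BS.a m n ^ n)).symm ξ = ξ from by
        conv_lhs => rw [← hfix]
        exact (π (BS.a m n ^ n)).symm_apply_apply ξ]
      exact ih
  have hkey : ∀ k : ℤ, π (BS.a m n ^ (n * k)) ξ = ξ := by
    intro k
    rw [zpow_mul, map_zpow]
    exact hfixk k
  -- mixing forces ξ = 0
  have hmix := (hπ ξ ξ).comp hψ.tendsto_cofinite
  have heq : (fun k : ℤ => (inner ℂ (π (BS.a m n ^ (n * k)) ξ) ξ : ℂ)) =
      fun _ : ℤ => (inner ℂ ξ ξ : ℂ) := funext fun k => by rw [hkey k]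
  rw [Function.comp_def] at hmix
  simp only [heq] at hmix
  have : (inner ℂ ξ ξ : ℂ) = 0 := tendsto_nhds_unique tendsto_const_nhds hmix
  exact inner_self_eq_zero.mp this
end
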